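/- Let K be an algebraically closed field. Every 2-dimensional linear subspace of the space n_3(K) of strictly lower triangular 3×3 matrices is carried by conjugation by some element of GL_3(K) onto exactly one of the four subspaces Span{E_{21}, E_{31}}, Span{E_{31}, E_{32}}, Span{E_{21}, E_{32}}, Span{E_{21}+E_{32}, E_{31}}. -/

import Mathlib

open Matrix Submodule

/-- The `3×3` matrix unit `E_{ij}` (with `0`-indexed positions: `E_{21} = Eu 1 0`, etc.). -/
def Eu {K : Type*} [Field K] (i j : Fin 3) : Matrix (Fin 3) (Fin 3) K :=
  Matrix.single i j 1

/-- A `3×3` matrix is strictly lower triangular. -/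
def StrictLower {K : Type*} [Field K] (X : Matrix (Fin 3) (Fin 3) K) : Prop :=
  ∀ i j : Fin 3, i ≤ j → X i j = 0

/-- Conjugation by `g ∈ GL_n(K)` as a `K`-linear map on matrices. -/
def conjMap {K : Type*} [Field K] {n : ℕ} (g : GL (Fin n) K) :
    Matrix (Fin n) (Fin n) K →ₗ[K] Matrix (Fin n) (Fin n) K where
  toFun X := (g : Matrix (Fin n) (Fin n) K) * X *
    ((g⁻¹ : GL (Fin n) K) : Matrix (Fin n) (Fin n) K)
  map_add' X Y := by simp [Matrix.mul_add, Matrix.add_mul]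
  map_smul' c X := by simp [Matrix.mul_smul, Matrix.smul_mul]

section Helpers

variable {K : Type*} [Field K]

/- ## Matrix literal lemmas -/

lemma lower_form (a b c : K) :
    a • Eu 1 0 + b • Eu 2 0 + c • Eu 2 1 = !![0,0,0;a,0,0;b,c,0] := by
  ext i j; fin_cases i <;> fin_cases j <;>
    simp [Eu, Matrix.single, Matrix.vecHead, Matrix.vecTail]

lemma Eu10_lit : (Eu 1 0 : Matrix (Fin 3) (Fin 3) K) = !![0,0,0;1,0,0;0,0,0] := by
  have := lower_form (K := K) 1 0 0; simpa using this

lemma Eu20_lit : (Eu 2 0 : Matrix (Fin 3) (Fin 3) K) = !![0,0,0;0,0,0;1,0,0] := by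
  have := lower_form (K := K) 0 1 0; simpa using this

lemma Eu21_lit : (Eu 2 1 : Matrix (Fin 3) (Fin 3) K) = !![0,0,0;0,0,0;0,1,0] := by
  have := lower_form (K := K) 0 0 1; simpa using this

lemma Eu1021_lit : (Eu 1 0 + Eu 2 1 : Matrix (Fin 3) (Fin 3) K) = !![0,0,0;1,0,0;0,1,0] := by
  rw [Eu10_lit, Eu21_lit]
  ext i j; fin_cases i <;> fin_cases j <;> simp [Matrix.vecHead, Matrix.vecTail]

lemma combo12 (s t : K) : s • Eu 1 0 + t • Eu 2 0 = !![0,0,0;s,0,0;t,0,0] := by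
  ext i j; fin_cases i <;> fin_cases j <;>
    simp [Eu, Matrix.single, Matrix.vecHead, Matrix.vecTail]

lemma combo23 (s t : K) : s • Eu 2 0 + t • Eu 2 1 = !![0,0,0;0,0,0;s,t,0] := by
  ext i j; fin_cases i <;> fin_cases j <;>
    simp [Eu, Matrix.single, Matrix.vecHead, Matrix.vecTail]

lemma combo13 (s t : K) : s • Eu 1 0 + t • Eu 2 1 = !![0,0,0;s,0,0;0,t,0] := by
  ext i j; fin_cases i <;> fin_cases j <;>
    simp [Eu, Matrix.single, Matrix.vecHead, Matrix.vecTail]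

lemma combo4 (s t : K) : s • (Eu 1 0 + Eu 2 1) + t • Eu 2 0 = !![0,0,0;s,0,0;t,s,0] := by
  rw [Eu1021_lit, Eu20_lit]
  ext i j; fin_cases i <;> fin_cases j <;>
    simp [Matrix.vecHead, Matrix.vecTail]

lemma strictLower_decomp (X : Matrix (Fin 3) (Fin 3) K) (h : StrictLower X) :
    X = X 1 0 • Eu 1 0 + X 2 0 • Eu 2 0 + X 2 1 • Eu 2 1 := by
  rw [lower_form]
  ext i j; fin_cases i <;> fin_cases j <;>
    first
      | exact h _ _ (by decide)
      | rfl

/- ## Span helpers -/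

lemma span_pair_le {M : Type*} [AddCommMonoid M] [Module K M] {x y u v : M}
    (h1 : x ∈ span K {u, v}) (h2 : y ∈ span K {u, v}) :
    span K {x, y} ≤ span K {u, v} := by
  rw [span_le, Set.insert_subset_iff, Set.singleton_subset_iff]; exact ⟨h1, h2⟩

lemma span_pair_eq {M : Type*} [AddCommMonoid M] [Module K M] {x y u v : M}
    (h1 : x ∈ span K {u, v}) (h2 : y ∈ span K {u, v})
    (h3 : u ∈ span K {x, y}) (h4 : v ∈ span K {x, y}) :
    span K {x, y} = span K {u, v} :=
  le_antisymm (span_pair_le h1 h2) (span_pair_le h3 h4)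

/- ## conjMap helpers -/

def mk3 (A B : Matrix (Fin 3) (Fin 3) K) (h1 : A * B = 1) (h2 : B * A = 1) :
    GL (Fin 3) K := ⟨A, B, h1, h2⟩

lemma conjMap_mk3 (A B : Matrix (Fin 3) (Fin 3) K) (h1 : A * B = 1) (h2 : B * A = 1)
    (X : Matrix (Fin 3) (Fin 3) K) : conjMap (mk3 A B h1 h2) X = A * X * B := rfl

lemma conjMap_apply' {n : ℕ} (g : GL (Fin n) K) (X : Matrix (Fin n) (Fin n) K) :
    conjMap g X = (g : Matrix (Fin n) (Fin n) K) * X *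
      ((g⁻¹ : GL (Fin n) K) : Matrix (Fin n) (Fin n) K) := rfl

lemma conjMap_one {n : ℕ} : conjMap (1 : GL (Fin n) K) = LinearMap.id := by
  apply LinearMap.ext; intro X
  simp [conjMap_apply']

lemma conjMap_comp {n : ℕ} (g h : GL (Fin n) K) :
    (conjMap g).comp (conjMap h) = conjMap (g * h) := by
  apply LinearMap.ext; intro X
  simp [conjMap_apply', _root_.mul_inv_rev, Units.val_mul, Matrix.mul_assoc]

lemma map_conjMap_inv {n : ℕ} (g : GL (Fin n) K) (V : Submodule K (Matrix (Fin n) (Fin n) K)) :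
    Submodule.map (conjMap g⁻¹) (Submodule.map (conjMap g) V) = V := by
  rw [← Submodule.map_comp, conjMap_comp, inv_mul_cancel, conjMap_one, Submodule.map_id]

end Helpers

section Invariants

variable {K : Type*} [Field K]

/-- Invariant: all products vanish. -/
def P1 (V : Submodule K (Matrix (Fin 3) (Fin 3) K)) : Prop :=
  ∀ X ∈ V, ∀ Y ∈ V, X * Y = 0

/-- Invariant: closed under squaring. -/
def Psq (V : Submodule K (Matrix (Fin 3) (Fin 3) K)) : Prop :=
  ∀ X ∈ V, X * X ∈ V

/-- Invariant: a common two-dimensional kernel. -/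
def Q1 (V : Submodule K (Matrix (Fin 3) (Fin 3) K)) : Prop :=
  ∃ v w : Fin 3 → K, (∀ s t : K, s • v + t • w = 0 → s = 0 ∧ t = 0) ∧
    ∀ X ∈ V, X *ᵥ v = 0 ∧ X *ᵥ w = 0

lemma conj_mul_conj (g : GL (Fin 3) K) (X Y : Matrix (Fin 3) (Fin 3) K) :
    conjMap g X * conjMap g Y = conjMap g (X * Y) := by
  simp only [conjMap_apply', Matrix.mul_assoc]
  congr 2
  rw [← Matrix.mul_assoc]
  have : ((g⁻¹ : GL (Fin 3) K) : Matrix (Fin 3) (Fin 3) K) * (g : Matrix (Fin 3) (Fin 3) K) = 1 := by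
    exact_mod_cast Units.inv_mul g
  rw [this, Matrix.one_mul]

lemma P1_map (g : GL (Fin 3) K) (V : Submodule K (Matrix (Fin 3) (Fin 3) K)) (h : P1 V) :
    P1 (Submodule.map (conjMap g) V) := by
  rintro _ ⟨X, hX, rfl⟩ _ ⟨Y, hY, rfl⟩
  rw [conj_mul_conj, h X hX Y hY]
  simp

lemma Psq_of_P1 {V : Submodule K (Matrix (Fin 3) (Fin 3) K)} (h : P1 V) : Psq V :=
  fun X hX => by rw [h X hX X hX]; exact V.zero_mem

lemma Psq_map (g : GL (Fin 3) K) (V : Submodule K (Matrix (Fin 3) (Fin 3) K)) (h : Psq V) :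
    Psq (Submodule.map (conjMap g) V) := by
  rintro _ ⟨X, hX, rfl⟩
  rw [conj_mul_conj]
  exact ⟨X * X, h X hX, rfl⟩

lemma Q1_map (g : GL (Fin 3) K) (V : Submodule K (Matrix (Fin 3) (Fin 3) K)) (h : Q1 V) :
    Q1 (Submodule.map (conjMap g) V) := by
  obtain ⟨v, w, hind, hvw⟩ := h
  refine ⟨(g : Matrix (Fin 3) (Fin 3) K) *ᵥ v, (g : Matrix (Fin 3) (Fin 3) K) *ᵥ w, ?_, ?_⟩
  · intro s t hst
    apply hind s t
    have h2 := congrArg (fun u => ((g⁻¹ : GL (Fin 3) K) : Matrix (Fin 3) (Fin 3) K) *ᵥ u) hst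
    simp only [Matrix.mulVec_add, Matrix.mulVec_smul, Matrix.mulVec_mulVec,
      (by exact_mod_cast Units.inv_mul g :
        ((g⁻¹ : GL (Fin 3) K) : Matrix (Fin 3) (Fin 3) K) * (g : Matrix (Fin 3) (Fin 3) K) = 1),
      Matrix.one_mulVec, Matrix.mulVec_zero] at h2
    exact h2
  · rintro _ ⟨X, hX, rfl⟩
    have h1 : (g : Matrix (Fin 3) (Fin 3) K) * X *
        ((g⁻¹ : GL (Fin 3) K) : Matrix (Fin 3) (Fin 3) K) * (g : Matrix (Fin 3) (Fin 3) K)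
        = (g : Matrix (Fin 3) (Fin 3) K) * X := by
      rw [Matrix.mul_assoc ((g : Matrix (Fin 3) (Fin 3) K) * X),
        (by exact_mod_cast Units.inv_mul g :
          ((g⁻¹ : GL (Fin 3) K) : Matrix (Fin 3) (Fin 3) K) * (g : Matrix (Fin 3) (Fin 3) K) = 1),
        Matrix.mul_one]
    constructor <;>
    · rw [conjMap_apply', Matrix.mulVec_mulVec, h1, ← Matrix.mulVec_mulVec]
      first
        | rw [(hvw X hX).1, Matrix.mulVec_zero]
        | rw [(hvw X hX).2, Matrix.mulVec_zero]

/- ## Values of the invariants on the four representatives -/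

lemma P1_rep1 : P1 (span K {(Eu 1 0 : Matrix (Fin 3) (Fin 3) K), Eu 2 0}) := by
  intro X hX Y hY
  rw [mem_span_pair] at hX hY
  obtain ⟨s, t, rfl⟩ := hX; obtain ⟨s', t', rfl⟩ := hY
  rw [combo12, combo12, Matrix.mul_fin_three]
  ext i j; fin_cases i <;> fin_cases j <;> simp [Matrix.vecHead, Matrix.vecTail]

lemma P1_rep2 : P1 (span K {(Eu 2 0 : Matrix (Fin 3) (Fin 3) K), Eu 2 1}) := by
  intro X hX Y hY
  rw [mem_span_pair] at hX hY
  obtain ⟨s, t, rfl⟩ := hX; obtain ⟨s', t', rfl⟩ := hY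
  rw [combo23, combo23, Matrix.mul_fin_three]
  ext i j; fin_cases i <;> fin_cases j <;> simp [Matrix.vecHead, Matrix.vecTail]

lemma notPsq_rep3 : ¬ Psq (span K {(Eu 1 0 : Matrix (Fin 3) (Fin 3) K), Eu 2 1}) := by
  intro h
  have hX : (Eu 1 0 + Eu 2 1 : Matrix (Fin 3) (Fin 3) K) ∈
      span K {(Eu 1 0 : Matrix (Fin 3) (Fin 3) K), Eu 2 1} :=
    mem_span_pair.mpr ⟨1, 1, by module⟩
  have hsq : (Eu 1 0 + Eu 2 1 : Matrix (Fin 3) (Fin 3) K) * (Eu 1 0 + Eu 2 1) = Eu 2 0 := by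
    rw [Eu1021_lit, Eu20_lit, Matrix.mul_fin_three]
    norm_num
  have := h _ hX
  rw [hsq, mem_span_pair] at this
  obtain ⟨s, t, hst⟩ := this
  rw [combo13, Eu20_lit] at hst
  have := congrFun (congrFun hst 2) 0
  simp [Matrix.vecHead, Matrix.vecTail] at this

lemma Psq_rep4 : Psq (span K {(Eu 1 0 + Eu 2 1 : Matrix (Fin 3) (Fin 3) K), Eu 2 0}) := by
  intro X hX
  rw [mem_span_pair] at hX
  obtain ⟨s, t, rfl⟩ := hX
  rw [mem_span_pair]
  refine ⟨0, s * s, ?_⟩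
  rw [combo4 0 (s * s), combo4 s t, Matrix.mul_fin_three]
  ext i j; fin_cases i <;> fin_cases j <;>
    simp [Matrix.vecHead, Matrix.vecTail] <;> ring

lemma notP1_rep4 : ¬ P1 (span K {(Eu 1 0 + Eu 2 1 : Matrix (Fin 3) (Fin 3) K), Eu 2 0}) := by
  intro h
  have hX : (Eu 1 0 + Eu 2 1 : Matrix (Fin 3) (Fin 3) K) ∈
      span K {(Eu 1 0 + Eu 2 1 : Matrix (Fin 3) (Fin 3) K), Eu 2 0} :=
    subset_span (Set.mem_insert _ _)
  have := h _ hX _ hX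
  rw [Eu1021_lit, Matrix.mul_fin_three] at this
  have := congrFun (congrFun this 2) 0
  simp [Matrix.vecHead, Matrix.vecTail] at this

lemma Q1_rep1 : Q1 (span K {(Eu 1 0 : Matrix (Fin 3) (Fin 3) K), Eu 2 0}) := by
  refine ⟨![0, 1, 0], ![0, 0, 1], ?_, ?_⟩
  · intro s t h
    constructor
    · have := congrFun h 1; simpa using this
    · have := congrFun h 2; simpa using this
  · intro X hX
    rw [mem_span_pair] at hX
    obtain ⟨s, t, rfl⟩ := hX
    rw [combo12]
    constructor <;>
      · ext i; fin_cases i <;>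
          simp [Matrix.mulVec, dotProduct, Fin.sum_univ_three, Matrix.vecHead, Matrix.vecTail]

lemma notQ1_rep2 : ¬ Q1 (span K {(Eu 2 0 : Matrix (Fin 3) (Fin 3) K), Eu 2 1}) := by
  rintro ⟨v, w, hind, h⟩
  have hB : (Eu 2 0 : Matrix (Fin 3) (Fin 3) K) ∈ span K {(Eu 2 0 : Matrix (Fin 3) (Fin 3) K), Eu 2 1} :=
    subset_span (Set.mem_insert _ _)
  have hC : (Eu 2 1 : Matrix (Fin 3) (Fin 3) K) ∈ span K {(Eu 2 0 : Matrix (Fin 3) (Fin 3) K), Eu 2 1} :=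
    subset_span (Set.mem_insert_of_mem _ rfl)
  have hv0 : v 0 = 0 := by
    have := congrFun (h _ hB).1 2
    simpa [Eu20_lit, Matrix.mulVec, dotProduct, Fin.sum_univ_three,
      Matrix.vecHead, Matrix.vecTail] using this
  have hv1 : v 1 = 0 := by
    have := congrFun (h _ hC).1 2
    simpa [Eu21_lit, Matrix.mulVec, dotProduct, Fin.sum_univ_three,
      Matrix.vecHead, Matrix.vecTail] using this
  have hw0 : w 0 = 0 := by
    have := congrFun (h _ hB).2 2
    simpa [Eu20_lit, Matrix.mulVec, dotProduct, Fin.sum_univ_three,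
      Matrix.vecHead, Matrix.vecTail] using this
  have hw1 : w 1 = 0 := by
    have := congrFun (h _ hC).2 2
    simpa [Eu21_lit, Matrix.mulVec, dotProduct, Fin.sum_univ_three,
      Matrix.vecHead, Matrix.vecTail] using this
  obtain ⟨hw2, hv2⟩ := hind (w 2) (-(v 2)) (by
    funext i; fin_cases i <;>
      simp [hv0, hv1, hw0, hw1] <;> ring)
  have hv : v = 0 := by
    funext i; fin_cases i <;> simp [hv0, hv1, neg_eq_zero.mp hv2]
  have := (hind 1 0 (by simp [hv])).1
  exact one_ne_zero this

end Invariants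

section Uniqueness

variable {K : Type*} [Field K]

lemma reps_eq_of_conj (W V V' : Submodule K (Matrix (Fin 3) (Fin 3) K))
    (hV : V ∈ [span K {(Eu 1 0 : Matrix (Fin 3) (Fin 3) K), Eu 2 0}, span K {Eu 2 0, Eu 2 1},
      span K {Eu 1 0, Eu 2 1}, span K {Eu 1 0 + Eu 2 1, Eu 2 0}])
    (hV' : V' ∈ [span K {(Eu 1 0 : Matrix (Fin 3) (Fin 3) K), Eu 2 0}, span K {Eu 2 0, Eu 2 1},
      span K {Eu 1 0, Eu 2 1}, span K {Eu 1 0 + Eu 2 1, Eu 2 0}])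
    (g g' : GL (Fin 3) K)
    (h : Submodule.map (conjMap g) W = V) (h' : Submodule.map (conjMap g') W = V') :
    V = V' := by
  have hW : W = Submodule.map (conjMap g⁻¹) V := by rw [← h, map_conjMap_inv]
  have hW' : W = Submodule.map (conjMap g'⁻¹) V' := by rw [← h', map_conjMap_inv]
  have tP1 : P1 V → P1 V' := by
    intro hp; rw [← h', hW]; exact P1_map _ _ (P1_map _ _ hp)
  have tP1' : P1 V' → P1 V := by
    intro hp; rw [← h, hW']; exact P1_map _ _ (P1_map _ _ hp)
  have tPsq : Psq V → Psq V' := by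
    intro hp; rw [← h', hW]; exact Psq_map _ _ (Psq_map _ _ hp)
  have tPsq' : Psq V' → Psq V := by
    intro hp; rw [← h, hW']; exact Psq_map _ _ (Psq_map _ _ hp)
  have tQ1 : Q1 V → Q1 V' := by
    intro hp; rw [← h', hW]; exact Q1_map _ _ (Q1_map _ _ hp)
  have tQ1' : Q1 V' → Q1 V := by
    intro hp; rw [← h, hW']; exact Q1_map _ _ (Q1_map _ _ hp)
  simp only [List.mem_cons, List.not_mem_nil, or_false] at hV hV'
  rcases hV with rfl | rfl | rfl | rfl <;> rcases hV' with rfl | rfl | rfl | rfl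
  · rfl
  · exact absurd (tQ1 Q1_rep1) notQ1_rep2
  · exact absurd (tPsq (Psq_of_P1 P1_rep1)) notPsq_rep3
  · exact absurd (tP1 P1_rep1) notP1_rep4
  · exact absurd (tQ1' Q1_rep1) notQ1_rep2
  · rfl
  · exact absurd (tPsq (Psq_of_P1 P1_rep2)) notPsq_rep3
  · exact absurd (tP1 P1_rep2) notP1_rep4
  · exact absurd (tPsq' (Psq_of_P1 P1_rep1)) notPsq_rep3
  · exact absurd (tPsq' (Psq_of_P1 P1_rep2)) notPsq_rep3
  · rfl
  · exact absurd (tPsq' Psq_rep4) notPsq_rep3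
  · exact absurd (tP1' P1_rep1) notP1_rep4
  · exact absurd (tP1' P1_rep2) notP1_rep4
  · exact absurd (tPsq Psq_rep4) notPsq_rep3
  · rfl

end Uniqueness

section Existence

variable {K : Type*} [Field K]

lemma unip_mul_inv (p r : K) :
    !![1,0,0;p,1,0;0,r,1] * !![1,0,0;-p,1,0;p*r,-r,1] = (1 : Matrix (Fin 3) (Fin 3) K) := by
  rw [Matrix.mul_fin_three, Matrix.one_fin_three]
  ext i j; fin_cases i <;> fin_cases j <;>
    simp [Matrix.vecHead, Matrix.vecTail] <;> ring

lemma unip_inv_mul (p r : K) :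
    !![1,0,0;-p,1,0;p*r,-r,1] * !![1,0,0;p,1,0;0,r,1] = (1 : Matrix (Fin 3) (Fin 3) K) := by
  rw [Matrix.mul_fin_three, Matrix.one_fin_three]
  ext i j; fin_cases i <;> fin_cases j <;>
    simp [Matrix.vecHead, Matrix.vecTail] <;> ring

lemma conj_unip (p r a b c : K) :
    !![1,0,0;p,1,0;0,r,1] * !![0,0,0;a,0,0;b,c,0] * !![1,0,0;-p,1,0;p*r,-r,1]
      = !![0,0,0;a,0,0;b+r*a-c*p,c,0] := by
  rw [Matrix.mul_fin_three, Matrix.mul_fin_three]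
  ext i j; fin_cases i <;> fin_cases j <;>
    simp [Matrix.vecHead, Matrix.vecTail] <;> ring

lemma diag_mul_inv (d1 d2 : K) (h1 : d1 ≠ 0) (h2 : d2 ≠ 0) :
    !![d1,0,0;0,d2,0;0,0,1] * !![d1⁻¹,0,0;0,d2⁻¹,0;0,0,1] = (1 : Matrix (Fin 3) (Fin 3) K) := by
  rw [Matrix.mul_fin_three, Matrix.one_fin_three]
  ext i j; fin_cases i <;> fin_cases j <;>
    simp [Matrix.vecHead, Matrix.vecTail] <;> field_simp

lemma diag_inv_mul (d1 d2 : K) (h1 : d1 ≠ 0) (h2 : d2 ≠ 0) :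
    !![d1⁻¹,0,0;0,d2⁻¹,0;0,0,1] * !![d1,0,0;0,d2,0;0,0,1] = (1 : Matrix (Fin 3) (Fin 3) K) := by
  rw [Matrix.mul_fin_three, Matrix.one_fin_three]
  ext i j; fin_cases i <;> fin_cases j <;>
    simp [Matrix.vecHead, Matrix.vecTail] <;> field_simp

lemma conj_diag (d1 d2 a b c : K) :
    !![d1,0,0;0,d2,0;0,0,1] * !![0,0,0;a,0,0;b,c,0] * !![d1⁻¹,0,0;0,d2⁻¹,0;0,0,1]
      = !![0,0,0; d2*a*d1⁻¹,0,0; b*d1⁻¹, c*d2⁻¹,0] := by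
  rw [Matrix.mul_fin_three, Matrix.mul_fin_three]
  ext i j; fin_cases i <;> fin_cases j <;>
    simp [Matrix.vecHead, Matrix.vecTail] <;> ring

lemma smulB_lit (t : K) : t • (Eu 2 0 : Matrix (Fin 3) (Fin 3) K) = !![0,0,0;0,0,0;t,0,0] := by
  have := combo12 0 t; simpa using this

lemma not_two_of_le_singleton (W : Submodule K (Matrix (Fin 3) (Fin 3) K))
    (x : Matrix (Fin 3) (Fin 3) K) (h : W ≤ span K {x}) (hdim : Module.finrank K W = 2) :
    False := by
  have h1 : Module.finrank K (span K {x} : Submodule K (Matrix (Fin 3) (Fin 3) K)) ≤ 1 := by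
    rcases eq_or_ne x 0 with rfl | hx
    · rw [Submodule.span_zero_singleton]; simp
    · rw [finrank_span_singleton hx]
  have h2 := Submodule.finrank_mono (R := K) h
  omega

lemma caseB (W : Submodule K (Matrix (Fin 3) (Fin 3) K)) (a₁ b₁ c₁ a₂ b₂ c₂ : K)
    (hspan : W = span K {a₁ • Eu 1 0 + b₁ • Eu 2 0 + c₁ • Eu 2 1,
                         a₂ • Eu 1 0 + b₂ • Eu 2 0 + c₂ • Eu 2 1})
    (hD : a₁ * c₂ - a₂ * c₁ ≠ 0) :
    ∃ V ∈ [span K {(Eu 1 0 : Matrix (Fin 3) (Fin 3) K), Eu 2 0}, span K {Eu 2 0, Eu 2 1},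
      span K {Eu 1 0, Eu 2 1}, span K {Eu 1 0 + Eu 2 1, Eu 2 0}],
      ∃ g : GL (Fin 3) K, Submodule.map (conjMap g) W = V := by
  set p : K := (a₁ * b₂ - a₂ * b₁) / (a₁ * c₂ - a₂ * c₁) with hp
  set r : K := (b₂ * c₁ - b₁ * c₂) / (a₁ * c₂ - a₂ * c₁) with hr
  refine ⟨span K {Eu 1 0, Eu 2 1}, by simp, mk3 _ _ (unip_mul_inv p r) (unip_inv_mul p r), ?_⟩
  rw [hspan, Submodule.map_span, Set.image_pair]
  have e1 : conjMap (mk3 _ _ (unip_mul_inv p r) (unip_inv_mul p r))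
      (a₁ • Eu 1 0 + b₁ • Eu 2 0 + c₁ • Eu 2 1) = a₁ • Eu 1 0 + c₁ • Eu 2 1 := by
    rw [lower_form, conjMap_mk3, conj_unip,
      show b₁ + r * a₁ - c₁ * p = 0 by rw [hp, hr, div_mul_eq_mul_div, mul_div_assoc', add_div' _ _ _ hD, div_sub_div_same, div_eq_zero_iff]; left; ring, ← combo13]
  have e2 : conjMap (mk3 _ _ (unip_mul_inv p r) (unip_inv_mul p r))
      (a₂ • Eu 1 0 + b₂ • Eu 2 0 + c₂ • Eu 2 1) = a₂ • Eu 1 0 + c₂ • Eu 2 1 := by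
    rw [lower_form, conjMap_mk3, conj_unip,
      show b₂ + r * a₂ - c₂ * p = 0 by rw [hp, hr, div_mul_eq_mul_div, mul_div_assoc', add_div' _ _ _ hD, div_sub_div_same, div_eq_zero_iff]; left; ring, ← combo13]
  rw [e1, e2]
  apply span_pair_eq
  · exact mem_span_pair.mpr ⟨a₁, c₁, rfl⟩
  · exact mem_span_pair.mpr ⟨a₂, c₂, rfl⟩
  · exact mem_span_pair.mpr ⟨c₂ / (a₁ * c₂ - a₂ * c₁), -(c₁ / (a₁ * c₂ - a₂ * c₁)), by
      match_scalars <;> field_simp [show c₂ * a₁ - a₂ * c₁ ≠ 0 by rwa [mul_comm c₂ a₁]] <;> ring⟩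
  · exact mem_span_pair.mpr ⟨-(a₂ / (a₁ * c₂ - a₂ * c₁)), a₁ / (a₁ * c₂ - a₂ * c₁), by
      match_scalars <;> field_simp <;> ring⟩

end Existence

section ExistenceA

variable {K : Type*} [Field K]

lemma caseA (W : Submodule K (Matrix (Fin 3) (Fin 3) K)) (hdim : Module.finrank K W = 2)
    (a₁ b₁ c₁ a₂ b₂ c₂ : K)
    (hspan : W = span K {a₁ • Eu 1 0 + b₁ • Eu 2 0 + c₁ • Eu 2 1,
                         a₂ • Eu 1 0 + b₂ • Eu 2 0 + c₂ • Eu 2 1})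
    (hD : a₁ * c₂ - a₂ * c₁ = 0) (hnz : ¬ (a₁ = 0 ∧ c₁ = 0)) :
    ∃ V ∈ [span K {(Eu 1 0 : Matrix (Fin 3) (Fin 3) K), Eu 2 0}, span K {Eu 2 0, Eu 2 1},
      span K {Eu 1 0, Eu 2 1}, span K {Eu 1 0 + Eu 2 1, Eu 2 0}],
      ∃ g : GL (Fin 3) K, Submodule.map (conjMap g) W = V := by
  obtain ⟨l, ha2, hc2⟩ : ∃ l : K, a₂ = l * a₁ ∧ c₂ = l * c₁ := by
    by_cases ha : a₁ = 0
    · have hc : c₁ ≠ 0 := fun hcc => hnz ⟨ha, hcc⟩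
      refine ⟨c₂ / c₁, ?_, by field_simp⟩
      have : a₂ * c₁ = 0 := by rw [ha] at hD; linear_combination -hD
      rcases mul_eq_zero.mp this with h | h
      · rw [h, ha]; ring
      · exact absurd h hc
    · refine ⟨a₂ / a₁, by field_simp, ?_⟩
      rw [div_mul_eq_mul_div, eq_div_iff ha]
      linear_combination hD
  subst ha2; subst hc2
  by_cases hβ : b₂ - l * b₁ = 0
  · exfalso
    have hb2 : b₂ = l * b₁ := by linear_combination hβ
    subst hb2
    refine not_two_of_le_singleton W (a₁ • Eu 1 0 + b₁ • Eu 2 0 + c₁ • Eu 2 1) ?_ hdim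
    rw [hspan, span_le, Set.insert_subset_iff, Set.singleton_subset_iff]
    refine ⟨mem_span_singleton_self _, ?_⟩
    rw [SetLike.mem_coe, mem_span_singleton]
    exact ⟨l, by module⟩
  · have hW' : W = span K {a₁ • Eu 1 0 + c₁ • Eu 2 1, Eu 2 0} := by
      rw [hspan]
      apply span_pair_eq
      · exact mem_span_pair.mpr ⟨1, b₁, by module⟩
      · exact mem_span_pair.mpr ⟨l, b₂, by module⟩
      · exact mem_span_pair.mpr ⟨1 + l * b₁ / (b₂ - l * b₁), -(b₁ / (b₂ - l * b₁)), by
          match_scalars <;> field_simp <;> ring⟩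
      · exact mem_span_pair.mpr ⟨-(l / (b₂ - l * b₁)), 1 / (b₂ - l * b₁), by
          match_scalars <;> field_simp <;> ring⟩
    by_cases hc : c₁ = 0
    · have ha : a₁ ≠ 0 := fun h => hnz ⟨h, hc⟩
      subst hc
      refine ⟨span K {Eu 1 0, Eu 2 0}, by simp, 1, ?_⟩
      rw [conjMap_one, Submodule.map_id, hW']
      apply span_pair_eq
      · exact mem_span_pair.mpr ⟨a₁, 0, by module⟩
      · exact mem_span_pair.mpr ⟨0, 1, by module⟩
      · exact mem_span_pair.mpr ⟨a₁⁻¹, 0, by match_scalars <;> field_simp <;> simp⟩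
      · exact mem_span_pair.mpr ⟨0, 1, by module⟩
    · by_cases ha : a₁ = 0
      · subst ha
        refine ⟨span K {Eu 2 0, Eu 2 1}, by simp, 1, ?_⟩
        rw [conjMap_one, Submodule.map_id, hW']
        apply span_pair_eq
        · exact mem_span_pair.mpr ⟨0, c₁, by module⟩
        · exact mem_span_pair.mpr ⟨1, 0, by module⟩
        · exact mem_span_pair.mpr ⟨0, 1, by module⟩
        · exact mem_span_pair.mpr ⟨c₁⁻¹, 0, by match_scalars <;> field_simp <;> simp⟩
      · refine ⟨span K {Eu 1 0 + Eu 2 1, Eu 2 0}, by simp,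
          mk3 !![a₁*c₁,0,0;0,c₁,0;0,0,1] !![(a₁*c₁)⁻¹,0,0;0,c₁⁻¹,0;0,0,1]
            (diag_mul_inv _ _ (mul_ne_zero ha hc) hc)
            (diag_inv_mul _ _ (mul_ne_zero ha hc) hc), ?_⟩
        rw [hW', Submodule.map_span, Set.image_pair]
        have e1 : conjMap (mk3 !![a₁*c₁,0,0;0,c₁,0;0,0,1] !![(a₁*c₁)⁻¹,0,0;0,c₁⁻¹,0;0,0,1]
            (diag_mul_inv _ _ (mul_ne_zero ha hc) hc) (diag_inv_mul _ _ (mul_ne_zero ha hc) hc))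
            (a₁ • Eu 1 0 + c₁ • Eu 2 1) = Eu 1 0 + Eu 2 1 := by
          rw [combo13, conjMap_mk3, conj_diag,
            show c₁ * a₁ * (a₁*c₁)⁻¹ = 1 by field_simp,
            show (0:K) * (a₁*c₁)⁻¹ = 0 by ring,
            show c₁ * c₁⁻¹ = 1 by field_simp, ← Eu1021_lit]
        have e2 : conjMap (mk3 !![a₁*c₁,0,0;0,c₁,0;0,0,1] !![(a₁*c₁)⁻¹,0,0;0,c₁⁻¹,0;0,0,1]
            (diag_mul_inv _ _ (mul_ne_zero ha hc) hc) (diag_inv_mul _ _ (mul_ne_zero ha hc) hc))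
            (Eu 2 0) = (a₁*c₁)⁻¹ • Eu 2 0 := by
          rw [Eu20_lit, conjMap_mk3, conj_diag,
            show c₁ * 0 * (a₁*c₁)⁻¹ = 0 by ring,
            show (0:K) * c₁⁻¹ = 0 by ring,
            show (1:K) * (a₁*c₁)⁻¹ = (a₁*c₁)⁻¹ by ring, ← smulB_lit, Eu20_lit]
        rw [e1, e2]
        apply span_pair_eq
        · exact mem_span_pair.mpr ⟨1, 0, by module⟩
        · exact mem_span_pair.mpr ⟨0, (a₁*c₁)⁻¹, by module⟩
        · exact mem_span_pair.mpr ⟨1, 0, by module⟩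
        · exact mem_span_pair.mpr ⟨0, a₁*c₁, by match_scalars <;> field_simp⟩

end ExistenceA

/-- Every `2`-dimensional subspace of the space of strictly lower triangular `3×3`
matrices is carried by conjugation by some element of `GL_3(K)` onto exactly one of
`Span{E_{21},E_{31}}`, `Span{E_{31},E_{32}}`, `Span{E_{21},E_{32}}`,
`Span{E_{21}+E_{32},E_{31}}`. -/
theorem two_dim_subspaces_of_strictly_lower {K : Type*} [Field K] [IsAlgClosed K]
    (W : Submodule K (Matrix (Fin 3) (Fin 3) K))
    (hdim : Module.finrank K W = 2) (hW : ∀ X ∈ W, StrictLower X) :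
    ∃! V : Submodule K (Matrix (Fin 3) (Fin 3) K),
      V ∈ [Submodule.span K {Eu 1 0, Eu 2 0}, Submodule.span K {Eu 2 0, Eu 2 1},
           Submodule.span K {Eu 1 0, Eu 2 1}, Submodule.span K {Eu 1 0 + Eu 2 1, Eu 2 0}] ∧
      ∃ g : GL (Fin 3) K, Submodule.map (conjMap g) W = V := by
  let b : Module.Basis (Fin 2) K W := Module.finBasisOfFinrankEq K W hdim
  set X : Matrix (Fin 3) (Fin 3) K := ((b 0 : W) : Matrix (Fin 3) (Fin 3) K) with hXdef
  set Y : Matrix (Fin 3) (Fin 3) K := ((b 1 : W) : Matrix (Fin 3) (Fin 3) K) with hYdef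
  have hXW : X ∈ W := (b 0).2
  have hYW : Y ∈ W := (b 1).2
  have hrange : Set.range (fun i : Fin 2 => ((b i : W) : Matrix (Fin 3) (Fin 3) K)) = {X, Y} := by
    ext z; constructor
    · rintro ⟨i, rfl⟩; fin_cases i
      · exact Set.mem_insert _ _
      · exact Set.mem_insert_of_mem _ rfl
    · rintro (rfl | rfl)
      · exact ⟨0, rfl⟩
      · exact ⟨1, rfl⟩
  have hspan : W = span K {X, Y} := by
    conv_lhs => rw [← Submodule.map_subtype_top W, ← b.span_eq]
    rw [Submodule.map_span, ← Set.range_comp]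
    rw [show (⇑W.subtype ∘ ⇑b) = (fun i : Fin 2 => ((b i : W) : Matrix (Fin 3) (Fin 3) K)) from
      rfl, hrange]
  have hXd := strictLower_decomp X (hW X hXW)
  have hYd := strictLower_decomp Y (hW Y hYW)
  rw [hXd, hYd] at hspan
  have main : ∃ V ∈ [Submodule.span K {(Eu 1 0 : Matrix (Fin 3) (Fin 3) K), Eu 2 0},
      Submodule.span K {Eu 2 0, Eu 2 1}, Submodule.span K {Eu 1 0, Eu 2 1},
      Submodule.span K {Eu 1 0 + Eu 2 1, Eu 2 0}],
      ∃ g : GL (Fin 3) K, Submodule.map (conjMap g) W = V := by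
    by_cases hD : X 1 0 * Y 2 1 - Y 1 0 * X 2 1 = 0
    · by_cases h1 : X 1 0 = 0 ∧ X 2 1 = 0
      · by_cases h2 : Y 1 0 = 0 ∧ Y 2 1 = 0
        · exfalso
          refine not_two_of_le_singleton W (Eu 2 0) ?_ hdim
          rw [hspan, span_le, Set.insert_subset_iff, Set.singleton_subset_iff]
          constructor
          · rw [SetLike.mem_coe, mem_span_singleton]
            exact ⟨X 2 0, by rw [h1.1, h1.2]; module⟩
          · rw [SetLike.mem_coe, mem_span_singleton]
            exact ⟨Y 2 0, by rw [h2.1, h2.2]; module⟩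
        · refine caseA W hdim (Y 1 0) (Y 2 0) (Y 2 1) (X 1 0) (X 2 0) (X 2 1) ?_ ?_ h2
          · rw [hspan, Set.pair_comm]
          · linear_combination -hD
      · exact caseA W hdim _ _ _ _ _ _ hspan hD h1
    · exact caseB W _ _ _ _ _ _ hspan hD
  obtain ⟨V, hVmem, g, hg⟩ := main
  refine ⟨V, ⟨hVmem, g, hg⟩, ?_⟩
  rintro V' ⟨hV'mem, g', hg'⟩
  exact reps_eq_of_conj W V' V hV'mem hVmem g' g hg' hg
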